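/- Let G be an abelian group and S a finite sequence over G. If k ∈ [1, |S|−1] and |Σ_k(S)| ≤ 2, then |supp(S)| ≤ 2. -/

import Mathlib

/-- The set of sums of `k`-term subsequences of `S`. -/
def subsums {G : Type*} [AddCommGroup G] (S : Multiset G) (k : ℕ) : Set G :=
  {x | ∃ T ≤ S, Multiset.card T = k ∧ T.sum = x}

theorem stmt_3 {G : Type*} [AddCommGroup G] [DecidableEq G]
    (S : Multiset G) (k : ℕ) (hk1 : 1 ≤ k) (hk2 : k ≤ Multiset.card S - 1)
    (hsub : (subsums S k).ncard ≤ 2) :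
    S.toFinset.card ≤ 2 := by
  by_contra hcard
  push_neg at hcard
  rw [Finset.two_lt_card_iff] at hcard
  obtain ⟨a, b, c, ha, hb, hc, hab, hac, hbc⟩ := hcard
  rw [Multiset.mem_toFinset] at ha hb hc
  have hScard : k + 1 ≤ Multiset.card S := by
    have h1 : 1 ≤ Multiset.card S := by
      exact Multiset.card_pos.mpr (by rintro rfl; simp at ha)
    omega
  -- finiteness of subsums
  have hfin : (subsums S k).Finite := by
    have hss : subsums S k ⊆ ↑(S.powerset.toFinset.image Multiset.sum) := by
      rintro x ⟨T, hT, hTk, rfl⟩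
      simp only [Finset.coe_image, Set.mem_image, Finset.mem_coe,
        Multiset.mem_toFinset, Multiset.mem_powerset]
      exact ⟨T, hT, rfl⟩
    exact Set.Finite.subset (Finset.finite_toSet _) hss
  suffices h3 : ∃ x y z : G, x ≠ y ∧ x ≠ z ∧ y ≠ z ∧
      x ∈ subsums S k ∧ y ∈ subsums S k ∧ z ∈ subsums S k by
    obtain ⟨x, y, z, hxy, hxz, hyz, hx, hy, hz⟩ := h3
    have hss : ({x, y, z} : Set G) ⊆ subsums S k := by
      rintro w hw
      simp only [Set.mem_insert_iff, Set.mem_singleton_iff] at hw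
      rcases hw with rfl | rfl | rfl <;> assumption
    have hle := Set.ncard_le_ncard hss hfin
    rw [Set.ncard_eq_three.mpr ⟨x, y, z, hxy, hxz, hyz, rfl⟩] at hle
    omega
  rcases eq_or_lt_of_le hk1 with hk | hk
  · -- k = 1
    refine ⟨a, b, c, hab, hac, hbc,
      ⟨{a}, Multiset.singleton_le.mpr ha, by simp [← hk], by simp⟩,
      ⟨{b}, Multiset.singleton_le.mpr hb, by simp [← hk], by simp⟩,
      ⟨{c}, Multiset.singleton_le.mpr hc, by simp [← hk], by simp⟩⟩
  · -- k ≥ 2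
    set M : Multiset G := ({a, b, c} : Finset G).val with hM
    have haM : a ∈ M := by simp [hM]
    have hbM : b ∈ M := by simp [hM]
    have hcM : c ∈ M := by simp [hM]
    have hMS : M ≤ S := by
      have h1 : ({a, b, c} : Finset G) ⊆ S.toFinset := by
        intro x hx
        simp only [Finset.mem_insert, Finset.mem_singleton] at hx
        rcases hx with rfl | rfl | rfl <;> simp [Multiset.mem_toFinset, ha, hb, hc]
      calc M ≤ S.toFinset.val := Finset.val_le_iff.mpr h1
        _ = S.dedup := Multiset.toFinset_val S
        _ ≤ S := Multiset.dedup_le S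
    have hMcard : Multiset.card M = 3 := by
      show ({a, b, c} : Finset G).card = 3
      rw [Finset.card_insert_of_notMem (by simp [hab, hac]),
        Finset.card_insert_of_notMem (by simp [hbc])]
      rfl
    set R : Multiset G := S - M with hR
    have hRcard : Multiset.card R = Multiset.card S - 3 := by
      rw [hR, Multiset.card_sub hMS, hMcard]
    set R' : Multiset G := (↑(R.toList.take (k - 2)) : Multiset G) with hR'
    have hR'R : R' ≤ R := by
      have h := Multiset.coe_le.mpr ((List.take_sublist (k - 2) R.toList).subperm)
      rwa [Multiset.coe_toList] at h
    have hR'card : Multiset.card R' = k - 2 := by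
      rw [hR']
      simp only [Multiset.coe_card, List.length_take, Multiset.length_toList]
      omega
    set T : Multiset G := M + R' with hT
    have hTS : T ≤ S := by
      calc T ≤ M + R := add_le_add_right hR'R M
        _ = S := add_tsub_cancel_of_le hMS
    have hTcard : Multiset.card T = k + 1 := by
      rw [hT, Multiset.card_add, hMcard, hR'card]; omega
    have hmem : ∀ x ∈ M, T.sum - x ∈ subsums S k := by
      intro x hxM
      have hxT : x ∈ T := Multiset.mem_add.mpr (Or.inl hxM)
      refine ⟨T.erase x, (Multiset.erase_le x T).trans hTS, ?_, ?_⟩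
      · rw [Multiset.card_erase_of_mem hxT, hTcard]; rfl
      · have h := Multiset.sum_cons x (T.erase x)
        rw [Multiset.cons_erase hxT] at h
        exact (eq_sub_of_add_eq' h.symm).symm ▸ rfl
    refine ⟨T.sum - a, T.sum - b, T.sum - c, ?_, ?_, ?_,
      hmem a haM, hmem b hbM, hmem c hcM⟩
    · exact fun h => hab (by simpa using sub_right_injective h)
    · exact fun h => hac (by simpa using sub_right_injective h)
    · exact fun h => hbc (by simpa using sub_right_injective h)
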